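/- arXiv:math/0602368 — 3 statements merged into one kernel-verified Lean document; each statement's English description precedes it below -/
import Mathlib

section
/- Let τ(y) be the formal power series with τ(0)=0 satisfying τ = y(1+τ)^4. Then φ = τ(1 − τ − τ^2) satisfies y^3 φ^4 + (4y+3)y^2 φ^3 + (6y^2+17y+3)y φ^2 + (4y^3+25y^2−14y+1)φ + y(y^2+11y−1) = 0. -/
open PowerSeries

/-- If `τ` is the power series with `τ(0)=0` satisfying `τ = y(1+τ)⁴`, then
`φ = τ(1−τ−τ²)` satisfies the quartic equation for the Tamari interval series. -/
theorem tau_substitution_satisfies_quartic (τ : PowerSeries ℚ)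
    (h0 : PowerSeries.constantCoeff τ = 0)
    (hτ : τ = PowerSeries.X * (1 + τ) ^ 4) :
    letI y : PowerSeries ℚ := PowerSeries.X
    letI φ : PowerSeries ℚ := τ * (1 - τ - τ ^ 2)
    y ^ 3 * φ ^ 4 + (4 * y + 3) * y ^ 2 * φ ^ 3
      + (6 * y ^ 2 + 17 * y + 3) * y * φ ^ 2
      + (4 * y ^ 3 + 25 * y ^ 2 - 14 * y + 1) * φ
      + y * (y ^ 2 + 11 * y - 1) = 0 := by
  set y : PowerSeries ℚ := PowerSeries.X with hy
  set φ : PowerSeries ℚ := τ * (1 - τ - τ ^ 2) with hφ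
  have h1 : (1 : PowerSeries ℚ) + τ ≠ 0 := by
    intro h
    have := congrArg (PowerSeries.constantCoeff) h
    simp [h0] at this
  have key : (y ^ 3 * φ ^ 4 + (4 * y + 3) * y ^ 2 * φ ^ 3
      + (6 * y ^ 2 + 17 * y + 3) * y * φ ^ 2
      + (4 * y ^ 3 + 25 * y ^ 2 - 14 * y + 1) * φ
      + y * (y ^ 2 + 11 * y - 1)) * (1 + τ) ^ 12 = 0 := by
    rw [hy, hφ]
    linear_combination (-((PowerSeries.X : PowerSeries ℚ)^2*τ^20 + (12:PowerSeries ℚ)*(PowerSeries.X : PowerSeries ℚ)^2*τ^19 + (62:PowerSeries ℚ)*(PowerSeries.X : PowerSeries ℚ)^2*τ^18 + (172:PowerSeries ℚ)*(PowerSeries.X : PowerSeries ℚ)^2*τ^17 + (237:PowerSeries ℚ)*(PowerSeries.X : PowerSeries ℚ)^2*τ^16 + (-16:PowerSeries ℚ)*(PowerSeries.X : PowerSeries ℚ)^2*τ^15 + (-664:PowerSeries ℚ)*(PowerSeries.X : PowerSeries ℚ)^2*τ^14 + (-1104:PowerSeries ℚ)*(PowerSeries.X : PowerSeries ℚ)^2*τ^13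 + (-494:PowerSeries ℚ)*(PowerSeries.X : PowerSeries ℚ)^2*τ^12 + (936:PowerSeries ℚ)*(PowerSeries.X : PowerSeries ℚ)^2*τ^11 + (1716:PowerSeries ℚ)*(PowerSeries.X : PowerSeries ℚ)^2*τ^10 + (936:PowerSeries ℚ)*(PowerSeries.X : PowerSeries ℚ)^2*τ^9 + (-494:PowerSeries ℚ)*(PowerSeries.X : PowerSeries ℚ)^2*τ^8 + (-1104:PowerSeries ℚ)*(PowerSeries.X : PowerSeries ℚ)^2*τ^7 + (-664:PowerSeries ℚ)*(PowerSeries.X : PowerSeries ℚ)^2*τ^6 + (-16:PowerSeries ℚ)*(PowerSeries.X : PowerSeries ℚ)^2*τ^5 + (237:PowerSeries ℚ)*(PowerSeries.X : PowerSeries ℚ)^2*τ^4 + (172:PowerSeries ℚ)*(PowerSeries.X : PowerSeries ℚ)^2*τ^3 + (62:PowerSeries ℚ)*(PowerSeries.X : PowerSeries ℚ)^2*τ^2 + (12:PowerSeries ℚ)*(PowerSeries.X : PowerSeries ℚ)^2*τ + (PowerSeries.X : PowerSeries ℚ)^2 + (-2:PowerSeries ℚ)*(PowerSeries.X : PowerSeries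 ℚ)*τ^17 + (-25:PowerSeries ℚ)*(PowerSeries.X : PowerSeries ℚ)*τ^16 + (-132:PowerSeries ℚ)*(PowerSeries.X : PowerSeries ℚ)*τ^15 + (-364:PowerSeries ℚ)*(PowerSeries.X : PowerSeries ℚ)*τ^14 + (-460:PowerSeries ℚ)*(PowerSeries.X : PowerSeries ℚ)*τ^13 + (224:PowerSeries ℚ)*(PowerSeries.X : PowerSeries ℚ)*τ^12 + (1804:PowerSeries ℚ)*(PowerSeries.X : PowerSeries ℚ)*τ^11 + (2772:PowerSeries ℚ)*(PowerSeries.X : PowerSeries ℚ)*τ^10 + (1232:PowerSeries ℚ)*(PowerSeries.X : PowerSeries ℚ)*τ^9 + (-2090:PowerSeries ℚ)*(PowerSeries.X : PowerSeries ℚ)*τ^8 + (-3916:PowerSeries ℚ)*(PowerSeries.X : PowerSeries ℚ)*τ^7 + (-2532:PowerSeries ℚ)*(PowerSeries.X : PowerSeries ℚ)*τ^6 + (140:PowerSeries ℚ)*(PowerSeries.X : PowerSeries ℚ)*τ^5 + (1496:PowerSeries ℚ)*(PowerSeries.X : PowerSeries ℚ)*τ^4 + (1220:PowerSeries ℚ)*(PowerSeries.X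 : PowerSeries ℚ)*τ^3 + (508:PowerSeries ℚ)*(PowerSeries.X : PowerSeries ℚ)*τ^2 + (114:PowerSeries ℚ)*(PowerSeries.X : PowerSeries ℚ)*τ + (11:PowerSeries ℚ)*(PowerSeries.X : PowerSeries ℚ) + τ^14 + (13:PowerSeries ℚ)*τ^13 + (77:PowerSeries ℚ)*τ^12 + (274:PowerSeries ℚ)*τ^11 + (649:PowerSeries ℚ)*τ^10 + (1067:PowerSeries ℚ)*τ^9 + (1221:PowerSeries ℚ)*τ^8 + (924:PowerSeries ℚ)*τ^7 + (363:PowerSeries ℚ)*τ^6 + (-77:PowerSeries ℚ)*τ^5 + (-209:PowerSeries ℚ)*τ^4 + (-142:PowerSeries ℚ)*τ^3 + (-53:PowerSeries ℚ)*τ^2 + (-11:PowerSeries ℚ)*τ + (-1:PowerSeries ℚ))) * hτ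
  rcases mul_eq_zero.mp key with h | h
  · exact h
  · exact absurd h (pow_ne_zero _ h1)
end

section
/- If τ = y(1+τ)^4 with τ(0)=0, then the coefficient of y^n in φ = τ(1−τ−τ^2) equals 2(4n+1)! / ((n+1)!(3n+2)!) for n ≥ 1. -/
open PowerSeries Finset

/-- Binomial coefficient with integer lower index, zero when negative. -/
def ch (a : ℕ) (b : ℤ) : ℚ :=
  if 0 ≤ b then (a.choose b.toNat : ℚ) else 0

lemma ch_coe (a b : ℕ) : ch a (b : ℤ) = (a.choose b : ℚ) := by
  simp [ch]

lemma ch_neg {a : ℕ} {b : ℤ} (h : b < 0) : ch a b = 0 := by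
  simp [ch, not_le.mpr h]

/-- Vandermonde, in `ch` form. -/
lemma sum_ch (M a m : ℕ) :
    ∑ j ∈ range (M + 1), (M.choose j : ℚ) * ch a ((m : ℤ) - j) =
      ((M + a).choose m : ℚ) := by
  have hv : ((M + a).choose m : ℚ) =
      ∑ j ∈ range (m + 1), (M.choose j : ℚ) * (a.choose (m - j) : ℚ) := by
    rw [Nat.add_choose_eq, Finset.Nat.sum_antidiagonal_eq_sum_range_succ_mk]
    push_cast
    rfl
  rw [hv]
  have h1 : ∑ j ∈ range (M + 1), (M.choose j : ℚ) * ch a ((m : ℤ) - j) =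
      ∑ j ∈ range (M + m + 1), (M.choose j : ℚ) * ch a ((m : ℤ) - j) := by
    apply Finset.sum_subset
    · intro x hx; simp only [mem_range] at *; omega
    · intro x hx hnx
      simp only [mem_range] at hx hnx
      have : M < x := by omega
      simp [Nat.choose_eq_zero_of_lt this]
  have h2 : ∑ j ∈ range (m + 1), (M.choose j : ℚ) * (a.choose (m - j) : ℚ) =
      ∑ j ∈ range (M + m + 1), (M.choose j : ℚ) * ch a ((m : ℤ) - j) := by
    have e : ∀ x ∈ range (m + 1), (M.choose x : ℚ) * (a.choose (m - x) : ℚ) =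
        (M.choose x : ℚ) * ch a ((m : ℤ) - x) := by
      intro x hx; simp only [mem_range] at hx
      have hh : (m : ℤ) - x = ((m - x : ℕ) : ℤ) := by omega
      rw [hh, ch_coe]
    rw [Finset.sum_congr rfl e]
    apply Finset.sum_subset
    · intro x hx; simp only [mem_range] at *; omega
    · intro x hx hnx
      simp only [mem_range] at hx hnx
      have : (m : ℤ) - x < 0 := by omega
      simp [ch_neg this]
  rw [h1, h2]

lemma coeff_tau_pow (τ : PowerSeries ℚ) (h0 : PowerSeries.constantCoeff τ = 0)
    (hτ : τ = PowerSeries.X * (1 + τ) ^ 4) :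
    ∀ n : ℕ, 1 ≤ n → ∀ k : ℕ, PowerSeries.coeff (R := ℚ) n (τ ^ k) =
      ch (4 * n - 1) ((n : ℤ) - k) - 3 * ch (4 * n - 1) ((n : ℤ) - k - 1) := by
  intro n
  induction n using Nat.strong_induction_on with
  | _ n IH =>
  intro hn k
  -- auxiliary: the k = 0 value of the RHS vanishes
  have hzero : ∀ m : ℕ, 1 ≤ m →
      ch (4 * m - 1) ((m : ℤ)) - 3 * ch (4 * m - 1) ((m : ℤ) - 1) = 0 := by
    intro m hm
    have h1 : (m : ℤ) = ((m : ℕ) : ℤ) := rfl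
    have h2 : (m : ℤ) - 1 = ((m - 1 : ℕ) : ℤ) := by omega
    rw [h2, ch_coe, ch_coe]
    have hc := Nat.choose_succ_right_eq (4 * m - 1) (m - 1)
    have hm1 : m - 1 + 1 = m := by omega
    have hm2 : 4 * m - 1 - (m - 1) = 3 * m := by omega
    rw [hm1, hm2] at hc
    have hq : ((4 * m - 1).choose m : ℚ) * m = ((4 * m - 1).choose (m - 1) : ℚ) * (3 * m) := by
      exact_mod_cast congrArg (Nat.cast : ℕ → ℚ) hc
    have hmq : (m : ℚ) ≠ 0 := by positivity
    have hX : ((4 * m - 1).choose m : ℚ) = 3 * ((4 * m - 1).choose (m - 1) : ℚ) := by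
      apply mul_right_cancel₀ hmq
      linarith [hq]
    rw [hX]; ring
  rcases Nat.eq_zero_or_pos k with hk0 | hk
  · subst hk0
    simp only [pow_zero, Nat.cast_zero, sub_zero]
    rw [PowerSeries.coeff_one, if_neg (by omega), hzero n hn]
  -- k ≥ 1
  have hpow : τ ^ k = PowerSeries.X ^ k * (1 + τ) ^ (4 * k) := by
    conv_lhs => rw [hτ]
    rw [mul_pow, ← pow_mul]
  rw [hpow, PowerSeries.coeff_X_pow_mul']
  rcases le_or_gt k n with hkn | hkn
  · rw [if_pos hkn]
    set m := n - k with hm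
    -- expand (1 + τ) ^ (4k)
    have hexp : (1 + τ) ^ (4 * k) =
        ∑ j ∈ range (4 * k + 1), τ ^ j * ((4 * k).choose j : ℚ⟦X⟧) := by
      rw [add_comm (1 : ℚ⟦X⟧) τ, add_pow]
      simp [one_pow, mul_one]
    rw [hexp, map_sum]
    have hcast : ∀ j, (PowerSeries.coeff (R := ℚ) m) (τ ^ j * ((4 * k).choose j : ℚ⟦X⟧)) =
        (PowerSeries.coeff (R := ℚ) m) (τ ^ j) * ((4 * k).choose j : ℚ) := by
      intro j
      rw [show ((((4 * k).choose j : ℕ)) : ℚ⟦X⟧) = PowerSeries.C (R := ℚ) ((4 * k).choose j : ℚ) by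
        rfl, PowerSeries.coeff_mul_C]
    simp only [hcast]
    rcases Nat.eq_zero_or_pos m with hm0 | hmpos
    · -- m = 0, i.e. k = n
      have hkn' : k = n := by omega
      rw [hm0]
      have hc0 : ∀ j : ℕ, (PowerSeries.coeff (R := ℚ) 0) (τ ^ j) = if j = 0 then 1 else 0 := by
        intro j
        rw [PowerSeries.coeff_zero_eq_constantCoeff, map_pow, h0]
        rcases Nat.eq_zero_or_pos j with h | h
        · simp [h]
        · simp [zero_pow (by omega : j ≠ 0), if_neg (by omega : ¬ j = 0)]
      rw [Finset.sum_congr rfl (fun j _ => by rw [hc0 j])]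
      rw [Finset.sum_eq_single 0 (fun b _ hb => by simp [hb]) (by simp)]
      have e1 : (n : ℤ) - k = ((0 : ℕ) : ℤ) := by omega
      have e2 : (n : ℤ) - k - 1 < 0 := by omega
      rw [ch_neg e2, e1, ch_coe]
      simp
    · have hmn : m < n := by omega
      have hIH := IH m hmn hmpos
      have hsum1 := sum_ch (4 * k) (4 * m - 1) m
      have hsum2 := sum_ch (4 * k) (4 * m - 1) (m - 1)
      have hre : ∀ j ∈ range (4 * k + 1),
          (PowerSeries.coeff (R := ℚ) m) (τ ^ j) * ((4 * k).choose j : ℚ) =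
            ((4 * k).choose j : ℚ) * ch (4 * m - 1) ((m : ℤ) - j) -
              3 * (((4 * k).choose j : ℚ) * ch (4 * m - 1) (((m - 1 : ℕ) : ℤ) - j)) := by
        intro j _
        rw [hIH j]
        have hh : (m : ℤ) - j - 1 = ((m - 1 : ℕ) : ℤ) - j := by omega
        rw [hh]; ring
      rw [Finset.sum_congr rfl hre, Finset.sum_sub_distrib, ← Finset.mul_sum, hsum1, hsum2]
      have e1 : (n : ℤ) - k = ((m : ℕ) : ℤ) := by omega
      have e2 : (m : ℤ) - 1 = ((m - 1 : ℕ) : ℤ) := by omega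
      have e3 : 4 * k + (4 * m - 1) = 4 * n - 1 := by omega
      rw [e1, e2, ch_coe, ch_coe, e3]
  · rw [if_neg (by omega)]
    have h1 : (n : ℤ) - k < 0 := by omega
    have h2 : (n : ℤ) - k - 1 < 0 := by omega
    rw [ch_neg h1, ch_neg h2]
    ring

lemma key_alg (a c0 c1 c2 c3 F G : ℚ) (ha : 0 ≤ a)
    (r1 : c0 * (a + 3) = c1 * (3 * a + 13))
    (r2 : c1 * (a + 2) = c2 * (3 * a + 14))
    (r3 : c2 * (a + 1) = c3 * (3 * a + 15))
    (hF : 0 < F) (hG : 0 < G) :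
    c0 - 3 * c1 - (c1 - 3 * c2) - (c2 - 3 * c3) =
      2 * ((4 * a + 17) * (4 * a + 16) * (c0 * F * G)) /
        ((a + 5) * (a + 4) * F * ((3 * a + 14) * (3 * a + 13) * G)) := by
  have d1 : (3 * a + 13) ≠ 0 := by positivity
  have d2 : (3 * a + 14) ≠ 0 := by positivity
  have d3 : (3 * a + 15) ≠ 0 := by positivity
  have hc1 : c1 = c0 * (a + 3) / (3 * a + 13) := by rw [eq_div_iff d1]; linarith
  have hc2 : c2 = c1 * (a + 2) / (3 * a + 14) := by rw [eq_div_iff d2]; linarith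
  have hc3 : c3 = c2 * (a + 1) / (3 * a + 15) := by rw [eq_div_iff d3]; linarith
  rw [hc3, hc2, hc1]
  have dF : F ≠ 0 := ne_of_gt hF
  have dG : G ≠ 0 := ne_of_gt hG
  have d4 : (a + 5) ≠ 0 := by positivity
  have d5 : (a + 4) ≠ 0 := by positivity
  field_simp
  ring

set_option maxHeartbeats 1000000 in
/-- If `τ = y(1+τ)⁴` with `τ(0) = 0`, then the coefficient of `yⁿ` in
`φ = τ(1−τ−τ²)` equals `2(4n+1)! / ((n+1)!(3n+2)!)` for `n ≥ 1`. -/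
theorem coeff_tau_substitution (τ : PowerSeries ℚ)
    (h0 : PowerSeries.constantCoeff τ = 0)
    (hτ : τ = PowerSeries.X * (1 + τ) ^ 4) (n : ℕ) (hn : 1 ≤ n) :
    PowerSeries.coeff (R := ℚ) n (τ * (1 - τ - τ ^ 2)) =
      2 * Nat.factorial (4 * n + 1) /
        (Nat.factorial (n + 1) * Nat.factorial (3 * n + 2)) := by
  have key := coeff_tau_pow τ h0 hτ n hn
  have hprod : τ * (1 - τ - τ ^ 2) = τ ^ 1 - τ ^ 2 - τ ^ 3 := by ring
  rw [hprod, map_sub, map_sub, key 1, key 2, key 3]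
  rcases lt_or_ge n 4 with h4 | h4
  · interval_cases n <;> norm_num [ch, Nat.factorial, Nat.choose, show (2 : ℤ).toNat = 2 from rfl]
  · obtain ⟨m, rfl⟩ : ∃ m, n = m + 4 := ⟨n - 4, by omega⟩
    rw [show 4 * (m + 4) - 1 = 4 * m + 15 from by omega]
    rw [show ((m + 4 : ℕ) : ℤ) - ((1 : ℕ) : ℤ) = ((m + 3 : ℕ) : ℤ) from by push_cast; ring]
    rw [show ((m + 4 : ℕ) : ℤ) - ((2 : ℕ) : ℤ) = ((m + 2 : ℕ) : ℤ) from by push_cast; ring]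
    rw [show ((m + 4 : ℕ) : ℤ) - ((3 : ℕ) : ℤ) = ((m + 1 : ℕ) : ℤ) from by push_cast; ring]
    rw [show ((m + 3 : ℕ) : ℤ) - 1 = ((m + 2 : ℕ) : ℤ) from by push_cast; ring]
    rw [show ((m + 2 : ℕ) : ℤ) - 1 = ((m + 1 : ℕ) : ℤ) from by push_cast; ring]
    rw [show ((m + 1 : ℕ) : ℤ) - 1 = ((m : ℕ) : ℤ) from by push_cast; ring]
    simp only [ch_coe]
    rw [show 4 * (m + 4) + 1 = 4 * m + 17 from by ring,
        show m + 4 + 1 = m + 5 from by ring,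
        show 3 * (m + 4) + 2 = 3 * m + 14 from by ring]
    have hf1 : ((4 * m + 17).factorial : ℚ) =
        (4 * (m : ℚ) + 17) * (4 * m + 16) * ((4 * m + 15).factorial : ℚ) := by
      rw [show 4 * m + 17 = 4 * m + 15 + 1 + 1 from by ring, Nat.factorial_succ,
        Nat.factorial_succ]
      push_cast; ring
    have hf2 : ((m + 5).factorial : ℚ) =
        ((m : ℚ) + 5) * (m + 4) * ((m + 3).factorial : ℚ) := by
      rw [show m + 5 = m + 3 + 1 + 1 from by ring, Nat.factorial_succ, Nat.factorial_succ]
      push_cast; ring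
    have hf3 : ((3 * m + 14).factorial : ℚ) =
        (3 * (m : ℚ) + 14) * (3 * m + 13) * ((3 * m + 12).factorial : ℚ) := by
      rw [show 3 * m + 14 = 3 * m + 12 + 1 + 1 from by ring, Nat.factorial_succ,
        Nat.factorial_succ]
      push_cast; ring
    have hch : ((4 * m + 15).factorial : ℚ) =
        ((4 * m + 15).choose (m + 3) : ℚ) * ((m + 3).factorial : ℚ) *
          ((3 * m + 12).factorial : ℚ) := by
      rw [← Nat.choose_mul_factorial_mul_factorial (show m + 3 ≤ 4 * m + 15 by omega),
        show 4 * m + 15 - (m + 3) = 3 * m + 12 from by omega]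
      push_cast; ring
    have r1' := Nat.choose_succ_right_eq (4 * m + 15) (m + 2)
    rw [show m + 2 + 1 = m + 3 from by ring, show 4 * m + 15 - (m + 2) = 3 * m + 13 from by omega]
      at r1'
    have r2' := Nat.choose_succ_right_eq (4 * m + 15) (m + 1)
    rw [show m + 1 + 1 = m + 2 from by ring, show 4 * m + 15 - (m + 1) = 3 * m + 14 from by omega]
      at r2'
    have r3' := Nat.choose_succ_right_eq (4 * m + 15) m
    rw [show 4 * m + 15 - m = 3 * m + 15 from by omega] at r3'
    have r1 : ((4 * m + 15).choose (m + 3) : ℚ) * ((m : ℚ) + 3) =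
        ((4 * m + 15).choose (m + 2) : ℚ) * (3 * (m : ℚ) + 13) := by
      exact_mod_cast congrArg (Nat.cast : ℕ → ℚ) r1'
    have r2 : ((4 * m + 15).choose (m + 2) : ℚ) * ((m : ℚ) + 2) =
        ((4 * m + 15).choose (m + 1) : ℚ) * (3 * (m : ℚ) + 14) := by
      exact_mod_cast congrArg (Nat.cast : ℕ → ℚ) r2'
    have r3 : ((4 * m + 15).choose (m + 1) : ℚ) * ((m : ℚ) + 1) =
        ((4 * m + 15).choose m : ℚ) * (3 * (m : ℚ) + 15) := by
      exact_mod_cast congrArg (Nat.cast : ℕ → ℚ) r3'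
    rw [hf1, hch, hf2, hf3]
    exact key_alg (m : ℚ) _ _ _ _ _ _ (Nat.cast_nonneg m) r1 r2 r3
      (by exact_mod_cast Nat.factorial_pos (m + 3))
      (by exact_mod_cast Nat.factorial_pos (3 * m + 12))
end

section
/- The formal power series ν = (1/32)(−1 + 12y + 8y^2 + (1−8y)^{3/2}) satisfies y^2 − 11y^3 − y^4 + (−1+12y+8y^2)ν − 16ν^2 = 0, and for n ≥ 2 its coefficient of y^{n+1} equals 3·2^{n-2}(2n−2)!/((n−1)!(n+1)!). -/
open PowerSeries

/-- The variable `y`. -/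
noncomputable def yv : PowerSeries ℚ := PowerSeries.X

/-- The binomial series `(1 − 8y)^{3/2}`, with constant term `1`:
its `n`-th coefficient is `(3/2 choose n)·(−8)ⁿ`. -/
noncomputable def sqrtCube : PowerSeries ℚ :=
  PowerSeries.mk fun n =>
    ((∏ i ∈ Finset.range n, ((3 : ℚ) / 2 - i)) / Nat.factorial n) * (-8) ^ n

/-- The series `ν = (1/32)(−1 + 12y + 8y² + (1−8y)^{3/2})`. -/
noncomputable def nuSeries : PowerSeries ℚ :=
  PowerSeries.C (R := ℚ) (1 / 32) * (-1 + 12 * yv + 8 * yv ^ 2 + sqrtCube)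

open Finset

/-- The coefficient sequence of `sqrtCube`. -/
def ccAux : ℕ → ℚ := fun n =>
  ((∏ i ∈ Finset.range n, ((3 : ℚ) / 2 - i)) / Nat.factorial n) * (-8) ^ n

lemma coeff_sqrtCubeAux (n : ℕ) : PowerSeries.coeff (R := ℚ) n sqrtCube = ccAux n := by
  simp [sqrtCube, ccAux]

lemma ccAux_rec (n : ℕ) : ((n : ℚ) + 1) * ccAux (n + 1) = (8 * n - 12) * ccAux n := by
  have h1 : (Nat.factorial n : ℚ) ≠ 0 := Nat.cast_ne_zero.mpr (Nat.factorial_ne_zero n)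
  simp only [ccAux, Finset.prod_range_succ, Nat.factorial_succ, pow_succ]
  push_cast
  field_simp
  ring

lemma sum_symAux (n : ℕ) :
    2 * ∑ k ∈ range (n + 1), (k : ℚ) * (ccAux k * ccAux (n - k)) =
      (n : ℚ) * ∑ k ∈ range (n + 1), ccAux k * ccAux (n - k) := by
  have h := Finset.sum_range_reflect (fun k => (k : ℚ) * (ccAux k * ccAux (n - k))) (n + 1)
  rw [two_mul]
  nth_rewrite 1 [← h]
  rw [← Finset.sum_add_distrib, Finset.mul_sum]
  apply Finset.sum_congr rfl
  intro k hk
  have hk' : k ≤ n := Nat.lt_succ_iff.mp (Finset.mem_range.mp hk)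
  have h1 : n + 1 - 1 - k = n - k := by omega
  have h2 : n - (n - k) = k := by omega
  rw [h1, h2]
  have h3 : ((n - k : ℕ) : ℚ) = (n : ℚ) - k := by
    have := Nat.cast_sub (R := ℚ) hk'
    rw [this]
  rw [h3]
  ring

lemma t_recAux (n : ℕ) :
    ((n : ℚ) + 1) * (∑ k ∈ range (n + 2), ccAux k * ccAux (n + 1 - k)) =
      (8 * n - 24) * ∑ k ∈ range (n + 1), ccAux k * ccAux (n - k) := by
  have hsym1 := sum_symAux (n + 1)
  have hsym0 := sum_symAux n
  push_cast at hsym1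
  rw [show ((n : ℚ) + 1) * (∑ k ∈ range (n + 2), ccAux k * ccAux (n + 1 - k)) =
      ((n : ℚ) + 1) * ∑ k ∈ range (n + 1 + 1), ccAux k * ccAux (n + 1 - k) from rfl, ← hsym1]
  rw [Finset.sum_range_succ']
  have h0 : ∀ j ∈ range (n + 1),
      ((j + 1 : ℕ) : ℚ) * (ccAux (j + 1) * ccAux (n + 1 - (j + 1))) =
      8 * ((j : ℚ) * (ccAux j * ccAux (n - j))) - 12 * (ccAux j * ccAux (n - j)) := by
    intro j hj
    have hrec := ccAux_rec j
    push_cast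
    rw [← mul_assoc, hrec]
    ring
  rw [Finset.sum_congr rfl h0]
  rw [Finset.sum_sub_distrib, ← Finset.mul_sum, ← Finset.mul_sum]
  simp only [Nat.cast_zero, zero_mul, add_zero]
  linear_combination 8 * hsym0

/-- Coefficients of `(1 − 8y)³`. -/
def qqAux : ℕ → ℚ
  | 0 => 1
  | 1 => -24
  | 2 => 192
  | 3 => -512
  | _ => 0

lemma qqAux_rec (n : ℕ) : ((n : ℚ) + 1) * qqAux (n + 1) = (8 * n - 24) * qqAux n := by
  rcases n with _ | _ | _ | _ | m <;> simp [qqAux] <;> push_cast <;> ring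

lemma t_eq_qAux (n : ℕ) : (∑ k ∈ range (n + 1), ccAux k * ccAux (n - k)) = qqAux n := by
  induction n with
  | zero => simp [ccAux, qqAux]
  | succ m ih =>
    have h1 := t_recAux m
    have h2 := qqAux_rec m
    rw [ih] at h1
    have hm : ((m : ℚ) + 1) ≠ 0 := by positivity
    exact mul_left_cancel₀ hm (h1.trans h2.symm)

lemma sq_eqAux : sqrtCube * sqrtCube =
    1 - 24 * yv + 192 * yv ^ 2 - 512 * yv ^ 3 := by
  ext n
  rw [PowerSeries.coeff_mul, Finset.Nat.sum_antidiagonal_eq_sum_range_succ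
    (fun a b => PowerSeries.coeff (R := ℚ) a sqrtCube * PowerSeries.coeff (R := ℚ) b sqrtCube)]
  simp only [coeff_sqrtCubeAux]
  rw [t_eq_qAux]
  have e24 : (24 : PowerSeries ℚ) = C (R := ℚ) 24 := (map_ofNat (C (R := ℚ)) 24).symm
  have e192 : (192 : PowerSeries ℚ) = C (R := ℚ) 192 := (map_ofNat (C (R := ℚ)) 192).symm
  have e512 : (512 : PowerSeries ℚ) = C (R := ℚ) 512 := (map_ofNat (C (R := ℚ)) 512).symm
  rcases n with _ | _ | _ | _ | m <;>
    simp [yv, qqAux, e24, e192, e512, coeff_C_mul, PowerSeries.coeff_one,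
      PowerSeries.coeff_X, PowerSeries.coeff_X_pow]

lemma ccAux_formula (n : ℕ) (hn : 2 ≤ n) : (1 / 32) * ccAux (n + 1) =
    3 * 2 ^ (n - 2) * Nat.factorial (2 * n - 2) /
      (Nat.factorial (n - 1) * Nat.factorial (n + 1)) := by
  induction n, hn using Nat.le_induction with
  | base => norm_num [ccAux, Finset.prod_range_succ, Nat.factorial]
  | succ n hn ih =>
    obtain ⟨k, rfl⟩ : ∃ k, n = k + 2 := ⟨n - 2, by omega⟩
    have e1 : k + 2 + 1 - 2 = k + 1 := by omega
    have e2 : 2 * (k + 2 + 1) - 2 = 2 * k + 4 := by omega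
    have e3 : k + 2 + 1 - 1 = k + 2 := by omega
    have e4 : k + 2 - 2 = k := by omega
    have e5 : 2 * (k + 2) - 2 = 2 * k + 2 := by omega
    have e6 : k + 2 - 1 = k + 1 := by omega
    rw [e1, e2, e3] at *
    rw [e4, e5, e6] at ih
    have hrec := ccAux_rec (k + 3)
    push_cast at hrec
    have hne : ∀ m : ℕ, (Nat.factorial m : ℚ) ≠ 0 :=
      fun m => Nat.cast_ne_zero.mpr (Nat.factorial_ne_zero m)
    have f1 : (Nat.factorial (2 * k + 4) : ℚ) =
        (2 * k + 4) * (2 * k + 3) * Nat.factorial (2 * k + 2) := by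
      rw [show 2 * k + 4 = (2 * k + 3) + 1 from rfl, Nat.factorial_succ,
        show 2 * k + 3 = (2 * k + 2) + 1 from rfl, Nat.factorial_succ]
      push_cast; ring
    have f2 : (Nat.factorial (k + 2 + 1 + 1) : ℚ) = (k + 4) * Nat.factorial (k + 3) := by
      rw [show k + 2 + 1 + 1 = (k + 3) + 1 from rfl, Nat.factorial_succ]
      push_cast; ring
    have f3 : (Nat.factorial (k + 2) : ℚ) = (k + 2) * Nat.factorial (k + 1) := by
      rw [show k + 2 = (k + 1) + 1 from rfl, Nat.factorial_succ]
      push_cast; ring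
    have hk4 : ((k : ℚ) + 4) ≠ 0 := by positivity
    have hc4 : ccAux (k + 2 + 1 + 1) = (8 * (k + 3) - 12) * ccAux (k + 3) / ((k : ℚ) + 4) := by
      rw [eq_div_iff hk4]
      show ccAux (k + 4) * ((k : ℚ) + 4) = _
      linear_combination hrec
    have hc3 : ccAux (k + 3) = 32 * (3 * 2 ^ k * Nat.factorial (2 * k + 2) /
        (Nat.factorial (k + 1) * Nat.factorial (k + 2 + 1))) := by
      show ccAux (k + 2 + 1) = _
      rw [← ih]; ring
    rw [hc4, hc3, f1, f2, f3]
    rw [show k + 2 + 1 = k + 3 from rfl]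
    field_simp
    ring

lemma nu32 : (32 : PowerSeries ℚ) * nuSeries = -1 + 12 * yv + 8 * yv ^ 2 + sqrtCube := by
  rw [nuSeries, ← mul_assoc]
  have h : (32 : PowerSeries ℚ) * C (R := ℚ) (1 / 32) = 1 := by
    rw [show (32 : PowerSeries ℚ) = C (R := ℚ) 32 from (map_ofNat (C (R := ℚ)) 32).symm, ← map_mul]
    norm_num
  rw [h, one_mul]

/-- `ν` satisfies `y² − 11y³ − y⁴ + (−1+12y+8y²)ν − 16ν² = 0`, and for `n ≥ 2`
its coefficient of `y^{n+1}` equals `3·2^{n−2}(2n−2)!/((n−1)!(n+1)!)`. -/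
theorem nuSeries_spec :
    (yv ^ 2 - 11 * yv ^ 3 - yv ^ 4 + (-1 + 12 * yv + 8 * yv ^ 2) * nuSeries
        - 16 * nuSeries ^ 2 = 0) ∧
    ∀ n : ℕ, 2 ≤ n →
      PowerSeries.coeff (R := ℚ) (n + 1) nuSeries =
        3 * 2 ^ (n - 2) * Nat.factorial (2 * n - 2) /
          (Nat.factorial (n - 1) * Nat.factorial (n + 1)) := by
  constructor
  · have h1024 : (1024 : PowerSeries ℚ) ≠ 0 := by
      intro h
      have := congrArg (PowerSeries.constantCoeff (R := ℚ)) h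
      rw [map_ofNat] at this
      norm_num at this
    apply mul_left_cancel₀ h1024
    rw [mul_zero]
    linear_combination (16 * (-1 + 12 * yv + 8 * yv ^ 2) - 512 * nuSeries - 16 * sqrtCube) * nu32
      - 16 * sq_eqAux
  · intro n hn
    have h0 : n + 1 ≠ 0 := by omega
    have h1 : n + 1 ≠ 1 := by omega
    have h2 : n + 1 ≠ 2 := by omega
    have h3 : n ≠ 0 := by omega
    have e12 : (12 : PowerSeries ℚ) = C (R := ℚ) 12 := (map_ofNat (C (R := ℚ)) 12).symm
    have e8 : (8 : PowerSeries ℚ) = C (R := ℚ) 8 := (map_ofNat (C (R := ℚ)) 8).symm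
    have hco : PowerSeries.coeff (R := ℚ) (n + 1) nuSeries = (1 / 32) * ccAux (n + 1) := by
      rw [nuSeries, coeff_C_mul]
      congr 1
      rw [map_add, map_add, map_add, coeff_sqrtCubeAux]
      simp [yv, e12, e8, coeff_C_mul, PowerSeries.coeff_one, PowerSeries.coeff_X,
        PowerSeries.coeff_X_pow, PowerSeries.coeff_C, h0, h1, h2, h3]
    rw [hco]
    exact ccAux_formula n hn
end
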